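/- Suppose P1, P2, P3, P4 are column-stochastic. Let p, q ∈ ℝ^k and let Δ be a real k×k matrix. Let A_⊥ denote the unfolding A built from middle matrix p qᵀ and let A denote the unfolding built from middle matrix p qᵀ + Δ (with the same P1, P2, P3, P4). Then | ‖A‖* − ‖A_⊥‖* | ≤ k · ‖Δ‖_F. -/

import Mathlib

/-- The nuclear norm of a real matrix: the sum of its singular values. -/
noncomputable def nuclearNorm {α β : Type*} [Fintype α] [Fintype β] [DecidableEq β]
    (M : Matrix α β ℝ) : ℝ :=
  ∑ i, Real.sqrt ((show (Matrix.transpose M * M).IsHermitian by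
    simpa [Matrix.conjTranspose_eq_transpose_of_trivial] using
      Matrix.isHermitian_conjTranspose_mul_self M).eigenvalues i)

/-- The Frobenius norm of a real matrix. -/
noncomputable def frobeniusNorm {α β : Type*} [Fintype α] [Fintype β] (M : Matrix α β ℝ) : ℝ :=
  Real.sqrt (∑ i, ∑ j, (M i j) ^ 2)

/-- A matrix is column-stochastic if its entries are nonnegative and each column sums to 1. -/
def colStochastic {α β : Type*} [Fintype α] (M : Matrix α β ℝ) : Prop :=
  (∀ i j, 0 ≤ M i j) ∧ ∀ j, ∑ i, M i j = 1

/-- The unfolding `A` built from middle matrix `Mmid`. -/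
def unfoldA {n k : ℕ} (P1 P2 P3 P4 : Matrix (Fin n) (Fin k) ℝ)
    (Mmid : Matrix (Fin k) (Fin k) ℝ) : Matrix (Fin n × Fin n) (Fin n × Fin n) ℝ :=
  Matrix.of fun r c => ∑ h, ∑ g, P1 r.1 h * P2 r.2 h * Mmid h g * P3 c.1 g * P4 c.2 g

namespace NucAux
open Matrix
variable {α β : Type*} [Fintype α] [Fintype β] [DecidableEq β]

lemma tmHerm (M : Matrix α β ℝ) : (Mᵀ * M).IsHermitian := by
  simpa [Matrix.conjTranspose_eq_transpose_of_trivial] using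
    Matrix.isHermitian_conjTranspose_mul_self M

noncomputable def lam (M : Matrix α β ℝ) : β → ℝ :=
  (tmHerm M).eigenvalues

noncomputable def evec (M : Matrix α β ℝ) (i : β) : β → ℝ :=
  (WithLp.equiv 2 (β → ℝ)) ((tmHerm M).eigenvectorBasis i)

noncomputable def sig (M : Matrix α β ℝ) (i : β) : ℝ := Real.sqrt (lam M i)

lemma lam_nonneg (M : Matrix α β ℝ) (i : β) : 0 ≤ lam M i :=
  by
    have h := Matrix.posSemidef_conjTranspose_mul_self M
    rw [Matrix.conjTranspose_eq_transpose_of_trivial] at h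
    exact h.eigenvalues_nonneg i

lemma sig_nonneg (M : Matrix α β ℝ) (i : β) : 0 ≤ sig M i := Real.sqrt_nonneg _

lemma sig_sq (M : Matrix α β ℝ) (i : β) : sig M i * sig M i = lam M i :=
  Real.mul_self_sqrt (lam_nonneg M i)

lemma nuclearNorm_eq (M : Matrix α β ℝ) : nuclearNorm M = ∑ i, sig M i := rfl

lemma evec_ortho (M : Matrix α β ℝ) (i j : β) :
    (∑ x, evec M i x * evec M j x) = if i = j then 1 else 0 := by
  have h := orthonormal_iff_ite.mp
    (tmHerm M).eigenvectorBasis.orthonormal i j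
  simpa [PiLp.inner_apply, RCLike.inner_apply, starRingEnd_apply, evec, mul_comm] using h

lemma evec_rows (M : Matrix α β ℝ) (x y : β) :
    (∑ i, evec M i x * evec M i y) = if x = y then 1 else 0 := by
  have h1 : (Matrix.of fun x i => evec M i x)ᵀ * (Matrix.of fun x i => evec M i x) = 1 := by
    ext i j
    simpa [Matrix.mul_apply, Matrix.one_apply] using evec_ortho M i j
  have h2 := mul_eq_one_comm.mp h1
  have h3 := congrFun (congrFun h2 x) y
  simpa [Matrix.mul_apply, Matrix.one_apply] using h3

lemma HM_evec (M : Matrix α β ℝ) (j x : β) :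
    (∑ c, (Mᴴ * M) x c * evec M j c) = lam M j * evec M j x := by
  have h := congrFun ((tmHerm M).mulVec_eigenvectorBasis j) x
  simpa [Matrix.mulVec, dotProduct, evec, lam] using h

end NucAux

namespace NucAux
open Matrix
variable {α β : Type*} [Fintype α] [Fintype β] [DecidableEq β]

lemma Mv_dot (M : Matrix α β ℝ) (i j : β) :
    (∑ x, (∑ c, M x c * evec M i c) * (∑ c, M x c * evec M j c))
      = lam M j * (if i = j then 1 else 0) := by
  have key : (M *ᵥ evec M i) ⬝ᵥ (M *ᵥ evec M j) = evec M i ⬝ᵥ ((Mᴴ * M) *ᵥ evec M j) := by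
    rw [← Matrix.mulVec_mulVec, Matrix.dotProduct_mulVec (evec M i)]
    have h : evec M i ᵥ* Mᴴ = M *ᵥ evec M i := by
      have ht : Mᴴ = Mᵀ := by ext r c; simp [Matrix.conjTranspose_apply]
      rw [ht, Matrix.vecMul_transpose]
    rw [h]
  have key2 : evec M i ⬝ᵥ ((Mᴴ * M) *ᵥ evec M j) = lam M j * (if i = j then 1 else 0) := by
    have : ∀ x, ((Mᴴ * M) *ᵥ evec M j) x = lam M j * evec M j x := by
      intro x; simpa [Matrix.mulVec, dotProduct] using HM_evec M j x
    simp only [dotProduct, this]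
    rw [← evec_ortho M i j, Finset.mul_sum]
    exact Finset.sum_congr rfl (fun x _ => by ring)
  have key3 : (M *ᵥ evec M i) ⬝ᵥ (M *ᵥ evec M j)
      = ∑ x, (∑ c, M x c * evec M i c) * (∑ c, M x c * evec M j c) := by
    simp [dotProduct, Matrix.mulVec]
  rw [← key3, key, key2]

noncomputable def uvec (M : Matrix α β ℝ) (i : β) : α → ℝ :=
  fun r => (sig M i)⁻¹ * (∑ c, M r c * evec M i c)

lemma Mv_eq (M : Matrix α β ℝ) (i : β) (x : α) :
    (∑ c, M x c * evec M i c) = sig M i * uvec M i x := by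
  by_cases h : sig M i = 0
  · have hlam : lam M i = 0 := by
      have := sig_sq M i; rw [h] at this; linarith
    have hz : (∑ x, (∑ c, M x c * evec M i c) * (∑ c, M x c * evec M i c)) = 0 := by
      rw [Mv_dot M i i]; simp [hlam]
    have hz2 : ∀ y ∈ Finset.univ, (∑ c, M y c * evec M i c) * (∑ c, M y c * evec M i c) = 0 := by
      have := (Finset.sum_eq_zero_iff_of_nonneg (fun y _ => mul_self_nonneg _)).mp hz
      exact this
    have := hz2 x (Finset.mem_univ x)
    have hx0 : (∑ c, M x c * evec M i c) = 0 := by nlinarith [this]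
    rw [hx0, h]; ring
  · unfold uvec
    field_simp

lemma uvec_dot (M : Matrix α β ℝ) (i j : β) :
    (∑ r, uvec M i r * uvec M j r)
      = if i = j then (if sig M i = 0 then 0 else 1) else 0 := by
  unfold uvec
  have : (∑ r, ((sig M i)⁻¹ * (∑ c, M r c * evec M i c)) * ((sig M j)⁻¹ * (∑ c, M r c * evec M j c)))
      = (sig M i)⁻¹ * (sig M j)⁻¹ * (lam M j * (if i = j then 1 else 0)) := by
    rw [← Mv_dot M i j, Finset.mul_sum]
    exact Finset.sum_congr rfl (fun x _ => by ring)
  rw [this]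
  by_cases h : i = j
  · subst h
    by_cases hs : sig M i = 0
    · have hlam : lam M i = 0 := by have := sig_sq M i; rw [hs] at this; linarith
      simp [hs, hlam]
    · rw [← sig_sq M i]
      field_simp
      simp [hs]
  · simp [h]

end NucAux

namespace NucAux
open Matrix Finset
variable {α β : Type*} [Fintype α] [Fintype β] [DecidableEq β]

lemma parseval (M : Matrix α β ℝ) (w : β → ℝ) :
    (∑ i, (∑ x, evec M i x * w x) ^ 2) = ∑ x, w x ^ 2 := by
  have h1 : ∀ i, (∑ x, evec M i x * w x) ^ 2
      = ∑ x, ∑ y, (evec M i x * evec M i y) * (w x * w y) := by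
    intro i
    rw [sq, Finset.sum_mul_sum]
    exact Finset.sum_congr rfl fun x _ => Finset.sum_congr rfl fun y _ => by ring
  simp only [h1]
  rw [Finset.sum_comm]
  refine Finset.sum_congr rfl fun x _ => ?_
  rw [Finset.sum_comm]
  have h2 : ∀ y, (∑ i, (evec M i x * evec M i y) * (w x * w y))
      = (if x = y then 1 else 0) * (w x * w y) := by
    intro y; rw [← Finset.sum_mul, evec_rows]
  simp only [h2, ite_mul, one_mul, zero_mul]
  simp [sq]

noncomputable def Xopt (M : Matrix α β ℝ) : Matrix α β ℝ :=
  Matrix.of fun r c => ∑ i, uvec M i r * evec M i c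

lemma Xopt_mulVec (M : Matrix α β ℝ) (w : β → ℝ) (r : α) :
    (∑ c, Xopt M r c * w c) = ∑ i, uvec M i r * (∑ x, evec M i x * w x) := by
  unfold Xopt
  simp only [Matrix.of_apply, Finset.sum_mul]
  rw [Finset.sum_comm]
  refine Finset.sum_congr rfl fun i _ => ?_
  rw [Finset.mul_sum]
  exact Finset.sum_congr rfl fun c _ => by ring

lemma Xopt_contraction (M : Matrix α β ℝ) (w : β → ℝ) :
    (∑ r, (∑ c, Xopt M r c * w c) ^ 2) ≤ ∑ c, w c ^ 2 := by
  have h1 : ∀ r, (∑ c, Xopt M r c * w c) ^ 2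
      = ∑ i, ∑ j, (uvec M i r * uvec M j r) *
          ((∑ x, evec M i x * w x) * (∑ x, evec M j x * w x)) := by
    intro r
    rw [Xopt_mulVec, sq, Finset.sum_mul_sum]
    exact Finset.sum_congr rfl fun i _ => Finset.sum_congr rfl fun j _ => by ring
  calc (∑ r, (∑ c, Xopt M r c * w c) ^ 2)
      = ∑ i, ∑ j, (∑ r, uvec M i r * uvec M j r) *
          ((∑ x, evec M i x * w x) * (∑ x, evec M j x * w x)) := by
        simp only [h1]
        rw [Finset.sum_comm]
        refine Finset.sum_congr rfl fun i _ => ?_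
        rw [Finset.sum_comm]
        refine Finset.sum_congr rfl fun j _ => ?_
        rw [← Finset.sum_mul]
    _ = ∑ i, (if sig M i = 0 then 0 else 1) * (∑ x, evec M i x * w x) ^ 2 := by
        refine Finset.sum_congr rfl fun i _ => ?_
        rw [Finset.sum_eq_single i]
        · rw [uvec_dot]; simp [sq]
        · intro j _ hj; rw [uvec_dot]; simp [Ne.symm hj]
        · intro h; exact absurd (Finset.mem_univ i) h
    _ ≤ ∑ i, (∑ x, evec M i x * w x) ^ 2 := by
        refine Finset.sum_le_sum fun i _ => ?_
        by_cases h : sig M i = 0 <;> simp [h, sq_nonneg]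
    _ = ∑ c, w c ^ 2 := parseval M w

lemma M_expand (M : Matrix α β ℝ) (r : α) (c : β) :
    M r c = ∑ i, (∑ x, M r x * evec M i x) * evec M i c := by
  have h1 : ∀ i, (∑ x, M r x * evec M i x) * evec M i c
      = ∑ x, M r x * (evec M i x * evec M i c) := by
    intro i; rw [Finset.sum_mul]; exact Finset.sum_congr rfl fun x _ => by ring
  simp only [h1]
  rw [Finset.sum_comm]
  have h2 : ∀ x, (∑ i, M r x * (evec M i x * evec M i c))
      = M r x * (if x = c then 1 else 0) := by
    intro x; rw [← Finset.mul_sum, evec_rows]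
  simp only [h2, mul_ite, mul_one, mul_zero]
  simp

lemma pair_expand (M Y : Matrix α β ℝ) :
    (∑ r, ∑ c, Y r c * M r c)
      = ∑ i, ∑ r, (∑ c, M r c * evec M i c) * (∑ c, Y r c * evec M i c) := by
  have h1 : ∀ r, (∑ c, Y r c * M r c)
      = ∑ i, (∑ x, M r x * evec M i x) * (∑ c, Y r c * evec M i c) := by
    intro r
    have e1 : ∀ c, Y r c * M r c
        = ∑ i, (∑ x, M r x * evec M i x) * (Y r c * evec M i c) := by
      intro c; rw [M_expand M r c, Finset.mul_sum]
      exact Finset.sum_congr rfl fun i _ => by ring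
    simp only [e1]
    rw [Finset.sum_comm]
    refine Finset.sum_congr rfl fun i _ => ?_
    rw [Finset.mul_sum]
  simp only [h1]
  exact Finset.sum_comm

lemma pair_Xopt (M : Matrix α β ℝ) :
    (∑ r, ∑ c, Xopt M r c * M r c) = nuclearNorm M := by
  rw [pair_expand, nuclearNorm_eq]
  refine Finset.sum_congr rfl fun i _ => ?_
  have hx : ∀ r, (∑ c, Xopt M r c * evec M i c) = uvec M i r := by
    intro r
    rw [Xopt_mulVec]
    rw [Finset.sum_eq_single i]
    · rw [evec_ortho]; simp
    · intro j _ hj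
      rw [evec_ortho M j i]; simp [hj]
    · intro h; exact absurd (Finset.mem_univ i) h
  simp only [hx, Mv_eq M i]
  have hr : (∑ r, sig M i * uvec M i r * uvec M i r)
      = sig M i * (∑ r, uvec M i r * uvec M i r) := by
    rw [Finset.mul_sum]; exact Finset.sum_congr rfl fun r _ => by ring
  rw [hr, uvec_dot]
  by_cases h : sig M i = 0 <;> simp [h]

lemma pair_le_nuclearNorm (M Y : Matrix α β ℝ)
    (hY : ∀ w : β → ℝ, (∑ r, (∑ c, Y r c * w c) ^ 2) ≤ ∑ c, w c ^ 2) :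
    (∑ r, ∑ c, Y r c * M r c) ≤ nuclearNorm M := by
  rw [pair_expand, nuclearNorm_eq]
  refine Finset.sum_le_sum fun i _ => ?_
  simp only [Mv_eq M i]
  have hrw : (∑ r, sig M i * uvec M i r * (∑ c, Y r c * evec M i c))
      = sig M i * (∑ r, uvec M i r * (∑ c, Y r c * evec M i c)) := by
    rw [Finset.mul_sum]; exact Finset.sum_congr rfl fun r _ => by ring
  rw [hrw]
  have hu : (∑ r, uvec M i r ^ 2) ≤ 1 := by
    have := uvec_dot M i i
    simp only [sq]
    rw [this]; by_cases h : sig M i = 0 <;> simp [h]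
  have hYv : (∑ r, (∑ c, Y r c * evec M i c) ^ 2) ≤ 1 := by
    calc (∑ r, (∑ c, Y r c * evec M i c) ^ 2) ≤ ∑ c, (evec M i c) ^ 2 := hY _
      _ = 1 := by
          have := evec_ortho M i i
          simp only [sq]; simpa using this
  have hcs := Finset.sum_mul_sq_le_sq_mul_sq Finset.univ (uvec M i)
    (fun r => ∑ c, Y r c * evec M i c)
  have hnn1 : (0:ℝ) ≤ ∑ r, uvec M i r ^ 2 := Finset.sum_nonneg fun r _ => sq_nonneg _
  have hnn2 : (0:ℝ) ≤ ∑ r, (∑ c, Y r c * evec M i c) ^ 2 :=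
    Finset.sum_nonneg fun r _ => sq_nonneg _
  have hsq : (∑ r, uvec M i r * (∑ c, Y r c * evec M i c)) ^ 2 ≤ 1 := by
    calc (∑ r, uvec M i r * (∑ c, Y r c * evec M i c)) ^ 2
        ≤ (∑ r, uvec M i r ^ 2) * (∑ r, (∑ c, Y r c * evec M i c) ^ 2) := hcs
      _ ≤ 1 := by nlinarith
  have hs : (∑ r, uvec M i r * (∑ c, Y r c * evec M i c)) ≤ 1 := by
    nlinarith [hsq, sq_nonneg ((∑ r, uvec M i r * (∑ c, Y r c * evec M i c)) - 1)]
  calc sig M i * (∑ r, uvec M i r * (∑ c, Y r c * evec M i c))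
      ≤ sig M i * 1 := mul_le_mul_of_nonneg_left hs (sig_nonneg M i)
    _ = sig M i := mul_one _

end NucAux

section AppAux
open Matrix Finset

lemma sum_swap3 {γ δ ε : Type*} [Fintype γ] [Fintype δ] [Fintype ε] (F : γ → δ → ε → ℝ) :
    ∑ r, ∑ c, ∑ p, F r c p = ∑ p, ∑ r, ∑ c, F r c p := by
  have h1 : ∀ r, ∑ c, ∑ p, F r c p = ∑ p, ∑ c, F r c p := fun r => Finset.sum_comm
  simp only [h1]
  exact Finset.sum_comm

lemma abs_le_one_of_sq_le_one {s : ℝ} (h : s ^ 2 ≤ 1) : |s| ≤ 1 := by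
  nlinarith [sq_abs s, abs_nonneg s, sq_nonneg (|s| - 1)]

lemma colStochastic_sum_sq_le_one {n k : ℕ} {P : Matrix (Fin n) (Fin k) ℝ}
    (h : colStochastic P) (j : Fin k) : (∑ x, P x j ^ 2) ≤ 1 := by
  have hle : ∀ x, P x j ≤ 1 := by
    intro x
    have h' := Finset.single_le_sum (f := fun i => P i j) (fun i _ => h.1 i j) (Finset.mem_univ x)
    rw [h.2 j] at h'
    exact h'
  calc (∑ x, P x j ^ 2) ≤ ∑ x, P x j :=
        Finset.sum_le_sum fun x _ => by nlinarith [h.1 x j, hle x]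
    _ = 1 := h.2 j

lemma col_sq_norm_le_one {n k : ℕ} {P Q : Matrix (Fin n) (Fin k) ℝ}
    (hP : colStochastic P) (hQ : colStochastic Q) (j : Fin k) :
    (∑ r : Fin n × Fin n, (P r.1 j * Q r.2 j) ^ 2) ≤ 1 := by
  rw [Fintype.sum_prod_type]
  have h1 : ∀ x1 : Fin n, (∑ x2, (P x1 j * Q x2 j) ^ 2) = P x1 j ^ 2 * ∑ x2, Q x2 j ^ 2 := by
    intro x1; rw [Finset.mul_sum]; exact Finset.sum_congr rfl fun x2 _ => by ring
  simp only [h1]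
  rw [← Finset.sum_mul]
  have hP1 := colStochastic_sum_sq_le_one hP j
  have hQ1 := colStochastic_sum_sq_le_one hQ j
  have hPn : (0:ℝ) ≤ ∑ x, P x j ^ 2 := Finset.sum_nonneg fun x _ => sq_nonneg _
  have hQn : (0:ℝ) ≤ ∑ x, Q x j ^ 2 := Finset.sum_nonneg fun x _ => sq_nonneg _
  nlinarith

lemma sum_abs_le_card_mul_frobenius {k : ℕ} (Δ : Matrix (Fin k) (Fin k) ℝ) :
    (∑ h, ∑ g, |Δ h g|) ≤ (k : ℝ) * frobeniusNorm Δ := by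
  have hcs := Finset.sum_mul_sq_le_sq_mul_sq Finset.univ
    (fun p : Fin k × Fin k => |Δ p.1 p.2|) (fun _ => (1:ℝ))
  simp only [mul_one, one_pow, sq_abs] at hcs
  have hone : (∑ _p : Fin k × Fin k, (1:ℝ)) = (k:ℝ) * (k:ℝ) := by
    simp [Finset.card_univ, mul_comm]
  rw [hone] at hcs
  have hsum : (∑ p : Fin k × Fin k, |Δ p.1 p.2|) = ∑ h, ∑ g, |Δ h g| :=
    Fintype.sum_prod_type _
  have hsq : (∑ p : Fin k × Fin k, Δ p.1 p.2 ^ 2) = ∑ h, ∑ g, Δ h g ^ 2 :=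
    Fintype.sum_prod_type _
  rw [hsum, hsq] at hcs
  have hnn : (0:ℝ) ≤ ∑ h, ∑ g, |Δ h g| :=
    Finset.sum_nonneg fun h _ => Finset.sum_nonneg fun g _ => abs_nonneg _
  have hF : frobeniusNorm Δ = Real.sqrt (∑ h, ∑ g, Δ h g ^ 2) := rfl
  have hk0 : (0:ℝ) ≤ (k:ℝ) := Nat.cast_nonneg k
  calc (∑ h, ∑ g, |Δ h g|) = Real.sqrt ((∑ h, ∑ g, |Δ h g|) ^ 2) :=
        (Real.sqrt_sq hnn).symm
    _ ≤ Real.sqrt ((∑ h, ∑ g, Δ h g ^ 2) * ((k:ℝ) * (k:ℝ))) := Real.sqrt_le_sqrt hcs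
    _ = (k : ℝ) * frobeniusNorm Δ := by
        rw [hF, show (∑ h, ∑ g, Δ h g ^ 2) * ((k:ℝ) * (k:ℝ)) = ((k:ℝ))^2 * (∑ h, ∑ g, Δ h g ^ 2) by ring,
          Real.sqrt_mul (sq_nonneg _), Real.sqrt_sq hk0]

lemma pair_unfoldA_abs_le {n k : ℕ}
    {P1 P2 P3 P4 : Matrix (Fin n) (Fin k) ℝ}
    (h1 : colStochastic P1) (h2 : colStochastic P2)
    (h3 : colStochastic P3) (h4 : colStochastic P4)
    (Δ : Matrix (Fin k) (Fin k) ℝ)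
    (X : Matrix (Fin n × Fin n) (Fin n × Fin n) ℝ)
    (hX : ∀ w : Fin n × Fin n → ℝ, (∑ r, (∑ c, X r c * w c) ^ 2) ≤ ∑ c, w c ^ 2) :
    |∑ r, ∑ c, X r c * unfoldA P1 P2 P3 P4 Δ r c| ≤ (k : ℝ) * frobeniusNorm Δ := by
  have expand : (∑ r, ∑ c, X r c * unfoldA P1 P2 P3 P4 Δ r c)
      = ∑ h, ∑ g, Δ h g *
          (∑ r, (P1 r.1 h * P2 r.2 h) * (∑ c, X r c * (P3 c.1 g * P4 c.2 g))) := by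
    have lhs1 : ∀ r c : Fin n × Fin n, X r c * unfoldA P1 P2 P3 P4 Δ r c
        = ∑ p : Fin k × Fin k, Δ p.1 p.2 *
            ((P1 r.1 p.1 * P2 r.2 p.1) * (X r c * (P3 c.1 p.2 * P4 c.2 p.2))) := by
      intro r c
      rw [Fintype.sum_prod_type]
      simp only [unfoldA, Matrix.of_apply, Finset.mul_sum]
      refine Finset.sum_congr rfl fun h _ => Finset.sum_congr rfl fun g _ => by ring
    simp only [lhs1]
    rw [sum_swap3]
    rw [Fintype.sum_prod_type]
    refine Finset.sum_congr rfl fun h _ => Finset.sum_congr rfl fun g _ => ?_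
    simp only [Finset.mul_sum]
  rw [expand]
  have hterm : ∀ h g, |Δ h g *
      (∑ r, (P1 r.1 h * P2 r.2 h) * (∑ c, X r c * (P3 c.1 g * P4 c.2 g)))| ≤ |Δ h g| := by
    intro h g
    rw [abs_mul]
    have hT : |∑ r, (P1 r.1 h * P2 r.2 h) * (∑ c, X r c * (P3 c.1 g * P4 c.2 g))| ≤ 1 := by
      apply abs_le_one_of_sq_le_one
      have hcs := Finset.sum_mul_sq_le_sq_mul_sq Finset.univ
        (fun r : Fin n × Fin n => P1 r.1 h * P2 r.2 h)
        (fun r : Fin n × Fin n => ∑ c, X r c * (P3 c.1 g * P4 c.2 g))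
      have ha := col_sq_norm_le_one h1 h2 h
      have hb := col_sq_norm_le_one h3 h4 g
      have hz : (∑ r, (∑ c, X r c * (P3 c.1 g * P4 c.2 g)) ^ 2)
          ≤ ∑ c : Fin n × Fin n, (P3 c.1 g * P4 c.2 g) ^ 2 := hX _
      have han : (0:ℝ) ≤ ∑ r : Fin n × Fin n, (P1 r.1 h * P2 r.2 h) ^ 2 :=
        Finset.sum_nonneg fun x _ => sq_nonneg _
      have hzn : (0:ℝ) ≤ ∑ r, (∑ c, X r c * (P3 c.1 g * P4 c.2 g)) ^ 2 :=
        Finset.sum_nonneg fun x _ => sq_nonneg _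
      nlinarith
    calc |Δ h g| * |∑ r, (P1 r.1 h * P2 r.2 h) * (∑ c, X r c * (P3 c.1 g * P4 c.2 g))|
        ≤ |Δ h g| * 1 := mul_le_mul_of_nonneg_left hT (abs_nonneg _)
      _ = |Δ h g| := mul_one _
  calc |∑ h, ∑ g, Δ h g * (∑ r, (P1 r.1 h * P2 r.2 h) * (∑ c, X r c * (P3 c.1 g * P4 c.2 g)))|
      ≤ ∑ h, |∑ g, Δ h g * (∑ r, (P1 r.1 h * P2 r.2 h) * (∑ c, X r c * (P3 c.1 g * P4 c.2 g)))| :=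
        Finset.abs_sum_le_sum_abs _ _
    _ ≤ ∑ h, ∑ g, |Δ h g * (∑ r, (P1 r.1 h * P2 r.2 h) * (∑ c, X r c * (P3 c.1 g * P4 c.2 g)))| :=
        Finset.sum_le_sum fun h _ => Finset.abs_sum_le_sum_abs _ _
    _ ≤ ∑ h, ∑ g, |Δ h g| := Finset.sum_le_sum fun h _ => Finset.sum_le_sum fun g _ => hterm h g
    _ ≤ (k : ℝ) * frobeniusNorm Δ := sum_abs_le_card_mul_frobenius Δ

end AppAux

/-- Perturbation bound for the unfolding `A`: `| ‖A‖* − ‖A_⊥‖* | ≤ k ‖Δ‖_F`. -/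
theorem nuclearNorm_unfoldA_perturbation (n k : ℕ) (hn : 0 < n) (hk : 0 < k)
    (P1 P2 P3 P4 : Matrix (Fin n) (Fin k) ℝ)
    (h1 : colStochastic P1) (h2 : colStochastic P2)
    (h3 : colStochastic P3) (h4 : colStochastic P4)
    (p q : Fin k → ℝ) (Δ : Matrix (Fin k) (Fin k) ℝ) :
    |nuclearNorm (unfoldA P1 P2 P3 P4 (Matrix.vecMulVec p q + Δ)) -
        nuclearNorm (unfoldA P1 P2 P3 P4 (Matrix.vecMulVec p q))| ≤
      (k : ℝ) * frobeniusNorm Δ := by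
  classical
  set A := unfoldA P1 P2 P3 P4 (Matrix.vecMulVec p q + Δ) with hAdef
  set B := unfoldA P1 P2 P3 P4 (Matrix.vecMulVec p q) with hBdef
  set D := unfoldA P1 P2 P3 P4 Δ with hDdef
  have hadd : ∀ r c, A r c = B r c + D r c := by
    intro r c
    simp only [hAdef, hBdef, hDdef, unfoldA, Matrix.of_apply, Matrix.add_apply]
    rw [← Finset.sum_add_distrib]
    refine Finset.sum_congr rfl fun h _ => ?_
    rw [← Finset.sum_add_distrib]
    exact Finset.sum_congr rfl fun g _ => by ring
  have hDbound : ∀ X : Matrix (Fin n × Fin n) (Fin n × Fin n) ℝ,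
      (∀ w : Fin n × Fin n → ℝ, (∑ r, (∑ c, X r c * w c) ^ 2) ≤ ∑ c, w c ^ 2) →
      |∑ r, ∑ c, X r c * D r c| ≤ (k : ℝ) * frobeniusNorm Δ := by
    intro X hX
    exact pair_unfoldA_abs_le h1 h2 h3 h4 Δ X hX
  have hle1 : nuclearNorm A ≤ nuclearNorm B + (k : ℝ) * frobeniusNorm Δ := by
    have hx := NucAux.pair_Xopt A
    have hc := NucAux.Xopt_contraction A
    have hsplit : (∑ r, ∑ c, NucAux.Xopt A r c * A r c)
        = (∑ r, ∑ c, NucAux.Xopt A r c * B r c) + (∑ r, ∑ c, NucAux.Xopt A r c * D r c) := by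
      rw [← Finset.sum_add_distrib]
      refine Finset.sum_congr rfl fun r _ => ?_
      rw [← Finset.sum_add_distrib]
      refine Finset.sum_congr rfl fun c _ => ?_
      rw [hadd r c]; ring
    have hB' := NucAux.pair_le_nuclearNorm B (NucAux.Xopt A) hc
    have hD' := (abs_le.mp (hDbound (NucAux.Xopt A) hc)).2
    linarith
  have hle2 : nuclearNorm B ≤ nuclearNorm A + (k : ℝ) * frobeniusNorm Δ := by
    have hx := NucAux.pair_Xopt B
    have hc := NucAux.Xopt_contraction B
    have hsplit : (∑ r, ∑ c, NucAux.Xopt B r c * A r c)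
        = (∑ r, ∑ c, NucAux.Xopt B r c * B r c) + (∑ r, ∑ c, NucAux.Xopt B r c * D r c) := by
      rw [← Finset.sum_add_distrib]
      refine Finset.sum_congr rfl fun r _ => ?_
      rw [← Finset.sum_add_distrib]
      refine Finset.sum_congr rfl fun c _ => ?_
      rw [hadd r c]; ring
    have hA' := NucAux.pair_le_nuclearNorm A (NucAux.Xopt B) hc
    have hD' := (abs_le.mp (hDbound (NucAux.Xopt B) hc)).1
    linarith
  rw [abs_sub_le_iff]
  constructor <;> linarith
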